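/- The sequence R_m = Σ_{v ∈ V, |v| < m} L_v·C(U^v), m ∈ ℕ, is a square-integrable martingale with respect to the filtration (A_m)_m, where A_m is the σ-field generated by {U^v : |v| < m}: each R_m is A_m-measurable with E[(R_m)²] < ∞ and E[R_{m+1} | A_m] = R_m almost surely. -/

import Mathlib

open MeasureTheory ProbabilityTheory Filter Finset

noncomputable section

/-- The Quicksort cost function `C(x) = 1 + 2x·ln x + 2(1-x)·ln(1-x)`
(with `Real.log 0 = 0`, encoding the convention `0·ln 0 = 0`). -/
def Cq (x : ℝ) : ℝ := 1 + 2 * x * Real.log x + 2 * (1 - x) * Real.log (1 - x)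

/-- Multiplicative path weights on the binary tree `V = {1,2}*` (words over `Bool`,
where `false` is the letter `1` and `true` is the letter `2`): `Lw U v w` is the
weight `L^v_w` of the path from `v` to `vw`, with `L^v_∅ = 1`,
`L^v_{w1} = L^v_w·U^{vw}` and `L^v_{w2} = L^v_w·(1 − U^{vw})`. -/
def Lw {Ω : Type*} (U : List Bool → Ω → ℝ) : List Bool → List Bool → Ω → ℝ
  | _, [], _ => 1
  | v, b :: w, ω => (if b then 1 - U v ω else U v ω) * Lw U (v ++ [b]) w ω

/-- The partial sums `R^v_m = Σ_{w ∈ V, |w| < m} L^v_w·C(U^{vw})` of the weighted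
branching process defining the Quicksort distribution. -/
def QSsum {Ω : Type*} (U : List Bool → Ω → ℝ) (v : List Bool) (m : ℕ) (ω : Ω) : ℝ :=
  ∑ k ∈ Finset.range m, ∑ w : Fin k → Bool,
    Lw U v (List.ofFn w) ω * Cq (U (v ++ List.ofFn w) ω)

lemma continuous_Cq : Continuous Cq := by
  have : Cq = fun x => 1 + 2 * (x * Real.log x) + 2 * (((1:ℝ) - x) * Real.log (1 - x)) := by
    funext x; simp only [Cq]; ring
  rw [this]
  exact (continuous_const.add (continuous_const.mul Real.continuous_mul_log)).add
    (continuous_const.mul (Real.continuous_mul_log.comp (continuous_const.sub continuous_id)))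

lemma abs_mul_log_le {x : ℝ} (h0 : 0 ≤ x) (h1 : x ≤ 1) : |x * Real.log x| ≤ 1 := by
  rcases eq_or_lt_of_le h0 with h | h
  · simp [← h]
  · rw [mul_comm]; exact le_of_lt (Real.abs_log_mul_self_lt x h h1)

lemma abs_Cq_le {x : ℝ} (hx : x ∈ Set.Icc (0:ℝ) 1) : |Cq x| ≤ 5 := by
  obtain ⟨h0, h1⟩ := hx
  have h2 : |x * Real.log x| ≤ 1 := abs_mul_log_le h0 h1
  have h3 : |(1 - x) * Real.log (1 - x)| ≤ 1 := abs_mul_log_le (by linarith) (by linarith)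
  have : Cq x = 1 + 2 * (x * Real.log x) + 2 * ((1 - x) * Real.log (1 - x)) := by
    simp only [Cq]; ring
  rw [this]
  calc |1 + 2 * (x * Real.log x) + 2 * ((1 - x) * Real.log (1 - x))|
      ≤ |1 + 2 * (x * Real.log x)| + |2 * ((1 - x) * Real.log (1 - x))| := abs_add_le _ _
    _ ≤ (|(1:ℝ)| + |2 * (x * Real.log x)|) + |2 * ((1 - x) * Real.log (1 - x))| := by
        gcongr; exact abs_add_le _ _
    _ ≤ (1 + 2 * 1) + 2 * 1 := by
        rw [abs_mul, abs_mul]; simp only [abs_one, abs_two]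
        rw [← abs_mul, abs_mul 2]
        simp only [abs_two]
        nlinarith
    _ ≤ 5 := by norm_num

/-- Antiderivative of `Cq`. -/
def Gq (x : ℝ) : ℝ := x + (x^2 * Real.log x - x^2/2) - ((1-x)^2 * Real.log (1-x) - (1-x)^2/2)

lemma continuous_Gq : Continuous Gq := by
  have h1 : Continuous fun x : ℝ => x^2 * Real.log x := by
    have : (fun x : ℝ => x^2 * Real.log x) = fun x : ℝ => x * (x * Real.log x) := by
      funext x; ring
    rw [this]; exact continuous_id.mul Real.continuous_mul_log
  have h2 : Continuous fun x : ℝ => (1-x)^2 * Real.log (1-x) :=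
    h1.comp (continuous_const.sub continuous_id)
  unfold Gq
  fun_prop

lemma hasDerivAt_Gq {x : ℝ} (h0 : 0 < x) (h1 : x < 1) : HasDerivAt Gq (Cq x) x := by
  have hx : x ≠ 0 := h0.ne'
  have hx1 : (1:ℝ) - x ≠ 0 := by intro h; apply h1.ne; linarith
  have d1 : HasDerivAt (fun x : ℝ => x^2 * Real.log x) (2*x*Real.log x + x) x := by
    have := (hasDerivAt_pow 2 x).mul (Real.hasDerivAt_log hx)
    refine this.congr_deriv ?_
    field_simp; ring
  have d2 : HasDerivAt (fun x : ℝ => (1-x)^2 * Real.log (1-x))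
      (-(2*(1-x)*Real.log (1-x) + (1-x))) x := by
    have dsub : HasDerivAt (fun x : ℝ => 1 - x) (-1) x := by
      simpa using (hasDerivAt_id x).const_sub (1:ℝ)
    have := ((hasDerivAt_pow 2 (1-x)).mul (Real.hasDerivAt_log hx1)).comp x dsub
    refine this.congr_deriv ?_
    field_simp; ring
  have : HasDerivAt Gq (1 + (2*x*Real.log x + x - x) - (-(2*(1-x)*Real.log (1-x) + (1-x)) - (-(1-x)))) x := by
    unfold Gq
    have dA : HasDerivAt (fun x : ℝ => x^2/2) x x := by
      have := (hasDerivAt_pow 2 x).div_const 2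
      refine this.congr_deriv ?_; push_cast; ring
    have dB : HasDerivAt (fun x : ℝ => (1-x)^2/2) (-(1-x)) x := by
      have dsub : HasDerivAt (fun x : ℝ => 1 - x) (-1) x := by
        simpa using (hasDerivAt_id x).const_sub (1:ℝ)
      have := ((hasDerivAt_pow 2 (1-x)).div_const 2).comp x dsub
      refine this.congr_deriv ?_; push_cast; ring
    exact ((hasDerivAt_id x).add (d1.sub dA)).sub (d2.sub dB)
  convert this using 1
  simp only [Cq]; ring

lemma integral_Cq : ∫ x in (0:ℝ)..1, Cq x = 0 := by
  have h := intervalIntegral.integral_eq_sub_of_hasDerivAt_of_le (by norm_num : (0:ℝ) ≤ 1)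
    (continuous_Gq.continuousOn)
    (fun x hx => hasDerivAt_Gq hx.1 hx.2)
    (continuous_Cq.intervalIntegrable 0 1)
  rw [h]
  simp [Gq, Real.log_zero, Real.log_one]; norm_num

lemma integral_Cq_Icc : ∫ x in Set.Icc (0:ℝ) 1, Cq x = 0 := by
  rw [MeasureTheory.integral_Icc_eq_integral_Ioc, ← intervalIntegral.integral_of_le (by norm_num : (0:ℝ) ≤ 1)]
  exact integral_Cq

lemma Lw_measurable {Ω : Type*} {m' : MeasurableSpace Ω} (U : List Bool → Ω → ℝ) :
    ∀ (l v : List Bool),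
      (∀ p : List Bool, p.length < l.length → Measurable[m'] (U (v ++ p))) →
      Measurable[m'] (Lw U v l)
  | [], v, _ => by
      have : Lw U v ([]) = fun _ => (1:ℝ) := rfl
      rw [this]; exact measurable_const
  | b :: w, v, h => by
      have hv : Measurable[m'] (U v) := by simpa using h [] (by simp)
      have hrec : Measurable[m'] (Lw U (v ++ [b]) w) := by
        refine Lw_measurable U w (v ++ [b]) (fun p hp => ?_)
        have := h (b :: p) (by simpa using Nat.succ_lt_succ hp)
        simpa [List.append_assoc] using this
      have : Lw U v (b :: w) =
          fun ω => (if b then 1 - U v ω else U v ω) * Lw U (v ++ [b]) w ω := rfl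
      rw [this]
      cases b with
      | false => exact hv.mul hrec
      | true => exact (measurable_const.sub hv).mul hrec

lemma Lw_mem {Ω : Type*} (U : List Bool → Ω → ℝ) {ω : Ω}
    (hω : ∀ u, U u ω ∈ Set.Icc (0:ℝ) 1) :
    ∀ (l v : List Bool), Lw U v l ω ∈ Set.Icc (0:ℝ) 1
  | [], v => by constructor <;> simp [Lw]
  | b :: w, v => by
      have h1 : (if b then 1 - U v ω else U v ω) ∈ Set.Icc (0:ℝ) 1 := by
        obtain ⟨h0, h1⟩ := hω v
        cases b <;> simp <;> constructor <;> linarith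
      have h2 := Lw_mem U hω w (v ++ [b])
      have : Lw U v (b :: w) ω =
          (if b then 1 - U v ω else U v ω) * Lw U (v ++ [b]) w ω := rfl
      rw [this]
      exact ⟨mul_nonneg h1.1 h2.1, mul_le_one₀ h1.2 h2.1 h2.2⟩

/-- The sequence `R_m = Σ_{|v|<m} L_v·C(U^v)` is a square-integrable
martingale with respect to the filtration `(𝒜_m)_m`, where `𝒜_m` is the σ-field
generated by `{U^v : |v| < m}`: each `R_m` is `𝒜_m`-measurable with `E[(R_m)²] < ∞`,
and `E[R_{m+1} | 𝒜_m] = R_m` almost surely. -/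
theorem quicksort_martingale {Ω : Type*} [MeasurableSpace Ω] (P : Measure Ω)
    [IsProbabilityMeasure P] (U : List Bool → Ω → ℝ)
    (hmeas : ∀ v, Measurable (U v))
    (hunif : ∀ v, Measure.map (U v) P = volume.restrict (Set.Icc (0 : ℝ) 1))
    (hindep : iIndepFun U P) :
    ∀ m : ℕ,
      StronglyMeasurable[⨆ v ∈ {v : List Bool | v.length < m},
          MeasurableSpace.comap (U v) (borel ℝ)]
        (QSsum U ([] : List Bool) m)
      ∧ MeasureTheory.MemLp (QSsum U ([] : List Bool) m) 2 P
      ∧ MeasureTheory.condExp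
            (⨆ v ∈ {v : List Bool | v.length < m}, MeasurableSpace.comap (U v) (borel ℝ))
            P (QSsum U ([] : List Bool) (m + 1))
          =ᵐ[P] QSsum U ([] : List Bool) m := by
  have hborel : (Real.measurableSpace : MeasurableSpace ℝ) = borel ℝ := BorelSpace.measurable_eq
  set A : ℕ → MeasurableSpace Ω := fun n =>
    ⨆ v ∈ {v : List Bool | v.length < n}, MeasurableSpace.comap (U v) (borel ℝ) with hA
  -- A n is a sub-σ-algebra
  have hAle : ∀ n, A n ≤ ‹MeasurableSpace Ω› := by
    intro n
    refine iSup_le fun v => iSup_le fun _ => ?_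
    rw [← hborel]
    exact measurable_iff_comap_le.mp (hmeas v)
  -- U v is A n-measurable for short v
  have hUA : ∀ n (v : List Bool), v.length < n → Measurable[A n] (U v) := by
    intro n v hv
    rw [measurable_iff_comap_le, hborel]
    exact le_biSup (fun v => MeasurableSpace.comap (U v) (borel ℝ)) hv
  -- Lw is A n-measurable for short words
  have hLwA : ∀ n k (w : Fin k → Bool), k ≤ n →
      Measurable[A n] (Lw U ([]) (List.ofFn w)) := by
    intro n k w hk
    refine Lw_measurable U (List.ofFn w) ([]) fun p hp => ?_
    rw [List.length_ofFn] at hp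
    simpa using hUA n p (lt_of_lt_of_le hp hk)
  -- QSsum is A n-measurable
  have hQSA : ∀ n, Measurable[A n] (QSsum U ([]) n) := by
    intro n
    unfold QSsum
    refine Finset.measurable_sum _ fun k hk => Finset.measurable_sum _ fun w _ => ?_
    rw [Finset.mem_range] at hk
    refine (hLwA n k w hk.le).mul ?_
    refine continuous_Cq.measurable.comp ?_
    have : ([] ++ List.ofFn w : List Bool).length < n := by simpa using hk
    exact hUA n _ this
  -- a.e. all the U's take values in [0,1]
  have hae : ∀ᵐ ω ∂P, ∀ u : List Bool, U u ω ∈ Set.Icc (0:ℝ) 1 := by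
    rw [ae_all_iff]
    intro u
    have h1 : ∀ᵐ x ∂(Measure.map (U u) P), x ∈ Set.Icc (0:ℝ) 1 := by
      rw [hunif u]
      exact ae_restrict_mem measurableSet_Icc
    exact (ae_map_iff (hmeas u).aemeasurable measurableSet_Icc).mp h1
  -- a.e. bound for the terms
  have htermbd : ∀ᵐ ω ∂P, ∀ (k : ℕ) (w : Fin k → Bool),
      ‖Lw U ([]) (List.ofFn w) ω * Cq (U ([] ++ List.ofFn w) ω)‖ ≤ 5 := by
    filter_upwards [hae] with ω hω
    intro k w
    rw [Real.norm_eq_abs, abs_mul]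
    have h1 := Lw_mem U hω (List.ofFn w) ([])
    have h2 := abs_Cq_le (hω ([] ++ List.ofFn w))
    rw [abs_of_nonneg h1.1]
    calc Lw U ([]) (List.ofFn w) ω * |Cq (U ([] ++ List.ofFn w) ω)| ≤ 1 * 5 :=
        mul_le_mul h1.2 h2 (abs_nonneg _) one_pos.le
      _ = 5 := one_mul 5
  -- ambient measurability of the terms
  have htermmeas : ∀ (k : ℕ) (w : Fin k → Bool),
      Measurable (fun ω => Lw U ([]) (List.ofFn w) ω * Cq (U ([] ++ List.ofFn w) ω)) := by
    intro k w
    exact (Lw_measurable U (List.ofFn w) ([]) fun p _ => hmeas _).mul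
      (continuous_Cq.measurable.comp (hmeas _))
  -- integrability of the terms
  have htermint : ∀ (k : ℕ) (w : Fin k → Bool),
      Integrable (fun ω => Lw U ([]) (List.ofFn w) ω * Cq (U ([] ++ List.ofFn w) ω)) P := by
    intro k w
    refine memLp_one_iff_integrable.mp <|
      MemLp.of_bound (htermmeas k w).aestronglyMeasurable 5 ?_
    filter_upwards [htermbd] with ω hω using hω k w
  -- integral of Cq ∘ U is zero
  have hCqint0 : ∀ u : List Bool, ∫ ω, Cq (U u ω) ∂P = 0 := by
    intro u
    rw [← integral_map (hmeas u).aemeasurable continuous_Cq.aestronglyMeasurable, hunif u]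
    exact integral_Cq_Icc
  -- main proof
  intro m
  have hsm : StronglyMeasurable[A m] (QSsum U ([]) m) := (hQSA m).stronglyMeasurable
  have hQSbd : ∀ᵐ ω ∂P, ‖QSsum U ([]) m ω‖ ≤ ∑ k ∈ Finset.range m, (2:ℝ)^k * 5 := by
    filter_upwards [htermbd] with ω hω
    rw [Real.norm_eq_abs]
    unfold QSsum
    refine (Finset.abs_sum_le_sum_abs _ _).trans (Finset.sum_le_sum fun k _ => ?_)
    refine (Finset.abs_sum_le_sum_abs _ _).trans ?_
    calc ∑ w : Fin k → Bool, |Lw U ([]) (List.ofFn w) ω * Cq (U ([] ++ List.ofFn w) ω)|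
        ≤ ∑ _w : Fin k → Bool, (5:ℝ) := by
          refine Finset.sum_le_sum fun w _ => ?_
          have := hω k w
          rwa [Real.norm_eq_abs] at this
      _ = (2:ℝ)^k * 5 := by
          rw [Finset.sum_const, Finset.card_univ]
          simp only [Fintype.card_fun, Fintype.card_bool, Fintype.card_fin, nsmul_eq_mul]
          push_cast
          ring
  have hmem2 : MemLp (QSsum U ([]) m) 2 P :=
    MemLp.of_bound ((hsm.measurable.mono (hAle m) le_rfl).aestronglyMeasurable) _ hQSbd
  refine ⟨hsm, hmem2, ?_⟩
  -- the martingale property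
  have hQSint : Integrable (QSsum U ([]) m) P := hmem2.integrable one_le_two
  set g : (Fin m → Bool) → Ω → ℝ :=
    fun w ω => Lw U ([]) (List.ofFn w) ω * Cq (U ([] ++ List.ofFn w) ω) with hg
  have hsplit : QSsum U ([]) (m+1) = QSsum U ([]) m + ∑ w : Fin m → Bool, g w := by
    funext ω
    show QSsum U ([]) (m+1) ω = QSsum U ([]) m ω + (∑ w : Fin m → Bool, g w) ω
    rw [Finset.sum_apply]
    unfold QSsum
    rw [Finset.sum_range_succ]
  have hgint : ∀ w : Fin m → Bool, Integrable (g w) P := fun w => htermint m w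
  have hsumint : Integrable (∑ w : Fin m → Bool, g w) P :=
    integrable_finset_sum' _ fun w _ => hgint w
  -- conditional expectation of each g w is zero
  have hgzero : ∀ w : Fin m → Bool, P[g w|A m] =ᵐ[P] fun _ => (0:ℝ) := by
    intro w
    have hLsm : StronglyMeasurable[A m] (Lw U ([]) (List.ofFn w)) :=
      (hLwA m m w le_rfl).stronglyMeasurable
    have hLbd : ∀ᵐ ω ∂P, ‖Lw U ([]) (List.ofFn w) ω‖ ≤ 1 := by
      filter_upwards [hae] with ω hω
      have h1 := Lw_mem U hω (List.ofFn w) ([])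
      rw [Real.norm_eq_abs, abs_of_nonneg h1.1]
      exact h1.2
    set u : List Bool := [] ++ List.ofFn w with hu
    have hCqmeas : Measurable (fun ω => Cq (U u ω)) :=
      continuous_Cq.measurable.comp (hmeas u)
    have hCqI : Integrable (fun ω => Cq (U u ω)) P := by
      refine memLp_one_iff_integrable.mp <|
        MemLp.of_bound hCqmeas.aestronglyMeasurable 5 ?_
      filter_upwards [hae] with ω hω
      rw [Real.norm_eq_abs]
      exact abs_Cq_le (hω u)
    have hmul := condExp_stronglyMeasurable_mul_of_bound (hAle m) hLsm hCqI 1 hLbd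
    -- independence
    have hindep2 : Indep (MeasurableSpace.comap (U u) Real.measurableSpace) (A m) P := by
      have hI : iIndep (fun i => MeasurableSpace.comap (U i) Real.measurableSpace) P :=
        (iIndepFun_iff_iIndep _ _ _).mp hindep
      have h := indep_iSup_of_disjoint
        (fun i => measurable_iff_comap_le.mp (hmeas i)) hI
        (S := {u}) (T := {v : List Bool | v.length < m}) ?_
      · rw [hA]
        simp only [hborel] at h
        simpa [hborel] using h
      · rw [Set.disjoint_singleton_left]
        simp [hu, List.length_ofFn]
    have hCqsm : StronglyMeasurable[MeasurableSpace.comap (U u) Real.measurableSpace]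
        (fun ω => Cq (U u ω)) := by
      refine Measurable.stronglyMeasurable ?_
      exact continuous_Cq.measurable.comp (measurable_iff_comap_le.mpr le_rfl)
    have hcond := condExp_indep_eq (μ := P)
      (measurable_iff_comap_le.mp (hmeas u)) (hAle m) hCqsm hindep2
    have hint0 : ∫ ω, Cq (U u ω) ∂P = 0 := hCqint0 u
    calc P[g w|A m] =ᵐ[P] Lw U ([]) (List.ofFn w) * P[fun ω => Cq (U u ω)|A m] := hmul
      _ =ᵐ[P] fun _ => (0:ℝ) := by
          filter_upwards [hcond] with ω hω
          show Lw U ([]) (List.ofFn w) ω * (P[fun ω => Cq (U u ω)|A m]) ω = 0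
          rw [hω, hint0, mul_zero]
  -- combine
  have h1 : P[QSsum U ([]) (m+1)|A m] =ᵐ[P]
      P[QSsum U ([]) m|A m] + P[∑ w : Fin m → Bool, g w|A m] := by
    rw [hsplit]
    exact condExp_add hQSint hsumint (A m)
  have h2 : P[QSsum U ([]) m|A m] = QSsum U ([]) m :=
    condExp_of_stronglyMeasurable (hAle m) hsm hQSint
  have h3 : P[∑ w : Fin m → Bool, g w|A m] =ᵐ[P] fun _ => (0:ℝ) := by
    refine (condExp_finset_sum (fun w _ => hgint w) (A m)).trans ?_
    have : ∀ᵐ ω ∂P, ∀ w : Fin m → Bool, (P[g w|A m]) ω = 0 := by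
      rw [ae_all_iff]
      exact fun w => hgzero w
    filter_upwards [this] with ω hω
    rw [Finset.sum_apply]
    exact Finset.sum_eq_zero fun w _ => hω w
  refine h1.trans ?_
  rw [h2]
  filter_upwards [h3] with ω hω
  show QSsum U ([]) m ω + (P[∑ w : Fin m → Bool, g w|A m]) ω = QSsum U ([]) m ω
  rw [hω, add_zero]

end
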